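/- Assume a = a(ρ) = 0 and ρ > 0. Let (f(t))_{t≥0} be a weak solution of the spatially homogeneous Boltzmann-type model with initial datum f₀ of total mass ρ and set θ̄(t) := (1/ρ)∫_I |θ − α_d| f(t)(dθ), θ̄₀ := θ̄(0). Then θ̄(t) ≤ θ̄₀·e^{−ρt} for all t ≥ 0; in particular θ̄(t) → 0 as t → +∞. -/

import Mathlib

open MeasureTheory Real Filter
open scoped Real

/-- The angular collision-probability profile `𝒢(s) = (1/π)·min{s, 2π−s}`. -/
noncomputable def Gfun (s : ℝ) : ℝ := (1 / π) * min s (2 * π - s)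

/-- The collision probability `P(θ⁎, φ⁎) = a·𝒢(|θ⁎ − φ⁎|)`. -/
noncomputable def Pcoll (a θ φ : ℝ) : ℝ := a * Gfun |θ - φ|

/-- The post-interaction angle
`𝒞(θ⁎, φ⁎) = θ⁎ + (1 − P(θ⁎, φ⁎))(α_d − θ⁎) + P(θ⁎, φ⁎)·α_c`. -/
noncomputable def Cpost (a αd αc θ φ : ℝ) : ℝ :=
  θ + (1 - Pcoll a θ φ) * (αd - θ) + Pcoll a θ φ * αc

/-- In the collisionless case `a = a(ρ) = 0`, weak solutions of the spatially homogeneous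
Boltzmann-type model satisfy `θ̄(t) ≤ θ̄₀ e^{−ρt}`, hence `θ̄(t) → 0` as `t → +∞`. -/
theorem stmt_17 (αd αc : ℝ) (hαd : αd ∈ Set.Ico (-π) π) (hαc : αc ∈ Set.Ico (-π) π)
    (ρ : ℝ) (hρ : 0 < ρ) (hρ1 : ρ ≤ 1)
    (a : ℝ) (ha : a = 0)
    (f : ℝ → Measure ℝ)
    (hsupp : ∀ t, 0 ≤ t → f t (Set.Ico (-π + αd) (π + αd))ᶜ = 0)
    (hmass : ∀ t, 0 ≤ t → f t Set.univ = ENNReal.ofReal ρ)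
    -- weak formulation of the spatially homogeneous Boltzmann-type model:
    (hweak : ∀ ψ : ℝ → ℝ, Measurable ψ → (∃ M, ∀ x, |ψ x| ≤ M) →
      (∀ x, ψ (x + 2 * π) = ψ x) → ∀ t, 0 ≤ t →
      HasDerivAt (fun s => ∫ θ, ψ θ ∂(f s))
        (∫ θ, ∫ φ, (ψ (Cpost a αd αc θ φ) - ψ θ) ∂(f t) ∂(f t)) t)
    (θbar : ℝ → ℝ) (hθbar : ∀ t, θbar t = (1 / ρ) * ∫ θ, |θ - αd| ∂(f t))
    (θbar0 : ℝ) (hθbar0 : θbar0 = θbar 0) :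
    (∀ t, 0 ≤ t → θbar t ≤ θbar0 * Real.exp (-ρ * t)) ∧
    Tendsto θbar atTop (nhds 0) := by
  have hp : (0:ℝ) < 2 * π := by positivity
  -- periodic extension of θ ↦ |θ - αd|
  set ψ : ℝ → ℝ := fun x => |toIcoMod hp (-π) (x - αd)| with hψdef
  have hmem : ∀ x : ℝ, toIcoMod hp (-π) (x - αd) ∈ Set.Ico (-π) π := by
    intro x
    have h := toIcoMod_mem_Ico hp (-π) (x - αd)
    have h2 : -π + 2 * π = π := by ring
    rwa [h2] at h
  have hψI : ∀ x ∈ Set.Ico (-π + αd) (π + αd), ψ x = |x - αd| := by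
    intro x hx
    have h : toIcoMod hp (-π) (x - αd) = x - αd := by
      rw [toIcoMod_eq_self hp]
      refine ⟨by linarith [hx.1], ?_⟩
      have h2 : -π + 2 * π = π := by ring
      rw [h2]; linarith [hx.2]
    simp [hψdef, h]
  have hψαd : ψ αd = 0 := by
    have h : toIcoMod hp (-π) (αd - αd) = αd - αd := by
      rw [toIcoMod_eq_self hp]
      constructor
      · simp; linarith [Real.pi_pos]
      · simp; linarith [Real.pi_pos]
    simp only [hψdef]
    rw [h]
    simp
  have hψmeas : Measurable ψ := by
    have heq : (fun x : ℝ => toIcoMod hp (-π) (x - αd))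
        = fun x => -π + Int.fract ((x - αd - (-π)) / (2*π)) * (2*π) :=
      funext fun x => toIcoMod_eq_add_fract_mul hp (-π) (x - αd)
    have hm : Measurable fun x : ℝ => -π + Int.fract ((x - αd - (-π)) / (2*π)) * (2*π) := by
      apply Measurable.const_add
      apply Measurable.mul_const
      exact Measurable.fract (by fun_prop)
    exact (heq ▸ hm).abs
  have hψbdd : ∃ M, ∀ x, |ψ x| ≤ M := by
    refine ⟨π, fun x => ?_⟩
    have h := hmem x
    rw [hψdef]; simp only
    rw [abs_abs, abs_le]
    exact ⟨by linarith [h.1], by linarith [h.2]⟩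
  have hψper : ∀ x, ψ (x + 2 * π) = ψ x := by
    intro x
    have h : x + 2 * π - αd = (x - αd) + 2 * π := by ring
    simp only [hψdef, h, toIcoMod_add_right]
  have hC : ∀ θ φ : ℝ, Cpost a αd αc θ φ = αd := by
    intro θ φ; simp [Cpost, Pcoll, ha]
  set u : ℝ → ℝ := fun s => ∫ θ, ψ θ ∂(f s) with hudef
  have hu : ∀ t, 0 ≤ t → u t = ρ * θbar t := by
    intro t ht
    have hae : ψ =ᵐ[f t] fun θ => |θ - αd| := by
      rw [Filter.EventuallyEq, ae_iff]
      refine measure_mono_null ?_ (hsupp t ht)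
      intro x hx
      simp only [Set.mem_setOf_eq] at hx
      intro hmemI
      exact hx (hψI x hmemI)
    rw [hudef]; simp only
    rw [integral_congr_ae hae, hθbar t]
    field_simp
  have key : ∀ t, 0 ≤ t → HasDerivAt u (-ρ * u t) t := by
    intro t ht
    have h := hweak ψ hψmeas hψbdd hψper t ht
    have heq : (∫ θ, ∫ φ, (ψ (Cpost a αd αc θ φ) - ψ θ) ∂(f t) ∂(f t)) = -ρ * u t := by
      have hinner : ∀ θ : ℝ, (∫ φ, (ψ (Cpost a αd αc θ φ) - ψ θ) ∂(f t)) = ρ * (-ψ θ) := by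
        intro θ
        have he : (fun φ => ψ (Cpost a αd αc θ φ) - ψ θ) = fun _ => (0 - ψ θ) := by
          funext φ; rw [hC θ φ, hψαd]
        rw [he, integral_const, measureReal_def, hmass t ht, ENNReal.toReal_ofReal hρ.le]
        simp [mul_comm]
      calc (∫ θ, ∫ φ, (ψ (Cpost a αd αc θ φ) - ψ θ) ∂(f t) ∂(f t))
          = ∫ θ, ρ * (-ψ θ) ∂(f t) :=
            integral_congr_ae (Filter.Eventually.of_forall fun θ => hinner θ)
        _ = ρ * ∫ θ, -ψ θ ∂(f t) := integral_const_mul ρ _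
        _ = -ρ * u t := by rw [integral_neg]; ring
    rw [heq] at h
    exact h
  have hsol : ∀ t, 0 ≤ t → u t = u 0 * Real.exp (-ρ * t) := by
    intro t ht
    set g : ℝ → ℝ := fun s => u s * Real.exp (ρ * s) with hgdef
    have hg' : ∀ s, 0 ≤ s → HasDerivAt g 0 s := by
      intro s hs
      have h1 : HasDerivAt (fun x : ℝ => ρ * x) ρ s := by
        simpa using (hasDerivAt_id s).const_mul ρ
      have h2 := h1.exp
      have h3 : HasDerivAt g (-ρ * u s * Real.exp (ρ * s) + u s * (Real.exp (ρ * s) * ρ)) s :=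
        (key s hs).mul h2
      convert h3 using 1
      ring
    have hcont : ContinuousOn g (Set.Icc 0 t) := fun x hx =>
      (hg' x hx.1).continuousAt.continuousWithinAt
    have hderiv : ∀ x ∈ Set.Ico 0 t, HasDerivWithinAt g 0 (Set.Ici x) x := fun x hx =>
      (hg' x hx.1).hasDerivWithinAt
    have hconst := constant_of_has_deriv_right_zero hcont hderiv t (Set.right_mem_Icc.2 ht)
    have hg0 : g 0 = u 0 := by simp [hgdef]
    have hgt : u t * Real.exp (ρ * t) = u 0 := by
      have : g t = g 0 := hconst
      rw [hg0] at this
      exact this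
    have hexp : Real.exp (ρ * t) ≠ 0 := Real.exp_ne_zero _
    rw [neg_mul, Real.exp_neg]
    rw [eq_comm, mul_comm, inv_mul_eq_iff_eq_mul₀ hexp, eq_comm, mul_comm]
    exact hgt
  have hθeq : ∀ t, 0 ≤ t → θbar t = θbar0 * Real.exp (-ρ * t) := by
    intro t ht
    have h1 := hu t ht
    have h0 := hu 0 le_rfl
    have hs := hsol t ht
    rw [h1, h0] at hs
    have hρ' : ρ ≠ 0 := hρ.ne'
    rw [hθbar0]
    have h2 : ρ * θbar t = ρ * (θbar 0 * Real.exp (-ρ * t)) := by rw [hs]; ring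
    exact mul_left_cancel₀ hρ' h2
  constructor
  · intro t ht; exact (hθeq t ht).le
  · have htend : Tendsto (fun t : ℝ => θbar0 * Real.exp (-ρ * t)) atTop (nhds 0) := by
      have h1 : Tendsto (fun t : ℝ => -ρ * t) atTop atBot :=
        Tendsto.const_mul_atTop_of_neg (by linarith : -ρ < 0) tendsto_id
      have h2 := Real.tendsto_exp_atBot.comp h1
      have h3 := h2.const_mul θbar0
      simpa using h3
    refine htend.congr' ?_
    filter_upwards [eventually_ge_atTop (0:ℝ)] with t ht
    exact (hθeq t ht).symm
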